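/- There is a constant C depending only on d with the following property. Let u : W → ℝ be graph-harmonic on W and assume every x ∈ W has at most D neighbors in W. Let Q ⊆ ℝ^d be a cube of side length r > 0 and let Q* be the concentric cube of side length 3r. Then for every k ∈ ℝ, Σ_{x∈W∩Q} Σ_{y∈W∩Q, y~x} (u(x) − u(y))² ≤ (C·D/r²)·Σ_{x∈W, dist(x, Q*) ≤ 1} (u(x) − k)². -/

import Mathlib

attribute [local instance] Classical.propDecidable

private lemma cac_amgm (a b p q : ℝ) :
    -((a ^ 2 - b ^ 2) * q * p) ≤ 1 / 8 * ((a + b) ^ 2 * p ^ 2) + 2 * ((a - b) ^ 2 * q ^ 2) := by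
  nlinarith [sq_nonneg ((a + b) * p + 4 * (a - b) * q)]

/-- Caccioppoli inequality for graph-harmonic functions (Lemma 4.1): there is a
constant `C = C(d)` such that for any graph-harmonic `u` on `W` with neighbor count
bounded by `D`, any cube `Q` of side `r` (with concentric triple `Q*`) and any `k ∈ ℝ`,
the energy of `u` in `Q` is bounded by `(C·D/r²)` times the squared `L²` norm of `u − k`
on the 1-neighborhood of `Q*`. -/
theorem caccioppoli (d : ℕ) (hd : 2 ≤ d) :
    ∃ C : ℝ, 0 < C ∧
      ∀ (W : Finset (EuclideanSpace ℝ (Fin d))) (u : EuclideanSpace ℝ (Fin d) → ℝ)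
        (D : ℕ) (c : EuclideanSpace ℝ (Fin d)) (r : ℝ) (k : ℝ),
        (∀ x ∈ W, ∑ y ∈ W.filter (fun y => y ≠ x ∧ dist x y ≤ 1), (u y - u x) = 0) →
        (∀ x ∈ W, (W.filter (fun y => y ≠ x ∧ dist x y ≤ 1)).card ≤ D) →
        0 < r →
        ∑ x ∈ W.filter (fun x => ∀ i, |x i - c i| ≤ r / 2),
            ∑ y ∈ (W.filter (fun x => ∀ i, |x i - c i| ≤ r / 2)).filter
                (fun y => y ≠ x ∧ dist x y ≤ 1),
              (u x - u y) ^ 2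
          ≤ (C * D / r ^ 2) *
              ∑ x ∈ W.filter (fun x =>
                  Metric.infDist x {y : EuclideanSpace ℝ (Fin d) | ∀ i, |y i - c i| ≤ 3 * r / 2} ≤ 1),
                (u x - k) ^ 2 := by
  refine ⟨4, by norm_num, ?_⟩
  intro W u D c r k hharm hdeg hr
  haveI : Nonempty (Fin d) := ⟨⟨0, by omega⟩⟩
  -- abbreviations
  set v : EuclideanSpace ℝ (Fin d) → ℝ := fun x => u x - k with hv
  set f : EuclideanSpace ℝ (Fin d) → ℝ :=
    fun x => Finset.univ.sup' Finset.univ_nonempty (fun i => |x i - c i|) with hfdef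
  set η : EuclideanSpace ℝ (Fin d) → ℝ :=
    fun x => min 1 (max ((3 * r / 2 - f x) / r) 0) with hetadef
  set N : EuclideanSpace ℝ (Fin d) → Finset (EuclideanSpace ℝ (Fin d)) :=
    fun x => W.filter (fun y => y ≠ x ∧ dist x y ≤ 1) with hN
  set Qs : Set (EuclideanSpace ℝ (Fin d)) :=
    {y : EuclideanSpace ℝ (Fin d) | ∀ i, |y i - c i| ≤ 3 * r / 2} with hQs
  -- coordinate bound
  have hcoord : ∀ (x y : EuclideanSpace ℝ (Fin d)) (i : Fin d), |x i - y i| ≤ dist x y := by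
    intro x y i
    rw [EuclideanSpace.dist_eq]
    have h1 : |x i - y i| = Real.sqrt (dist (x i) (y i) ^ 2) := by
      rw [Real.sqrt_sq_eq_abs, abs_of_nonneg dist_nonneg, Real.dist_eq]
    rw [h1]
    apply Real.sqrt_le_sqrt
    exact Finset.single_le_sum (f := fun j => dist (x j) (y j) ^ 2)
      (fun j _ => sq_nonneg _) (Finset.mem_univ i)
  have hfle : ∀ (x : EuclideanSpace ℝ (Fin d)) (i : Fin d), |x i - c i| ≤ f x := by
    intro x i
    simp only [hfdef]
    exact Finset.le_sup' (fun j => |x j - c j|) (Finset.mem_univ i)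
  have hfone : ∀ x y : EuclideanSpace ℝ (Fin d), f x ≤ f y + dist x y := by
    intro x y
    apply Finset.sup'_le
    intro i _
    calc |x i - c i| ≤ |x i - y i| + |y i - c i| := abs_sub_le _ _ _
      _ ≤ dist x y + f y := add_le_add (hcoord x y i) (hfle y i)
      _ = f y + dist x y := by ring
  have hfLip : ∀ x y : EuclideanSpace ℝ (Fin d), |f x - f y| ≤ dist x y := by
    intro x y
    rw [abs_sub_le_iff]
    constructor
    · linarith [hfone x y]
    · have := hfone y x; rw [dist_comm] at this; linarith
  -- cutoff properties
  have hη_nonneg : ∀ x, 0 ≤ η x := fun x => le_min zero_le_one (le_max_right _ _)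
  have hη_one : ∀ x, f x ≤ r / 2 → η x = 1 := by
    intro x hx
    have h1 : (1 : ℝ) ≤ (3 * r / 2 - f x) / r := by rw [le_div_iff₀ hr]; linarith
    simp only [hetadef]
    exact min_eq_left (le_max_of_le_left h1)
  have hη_supp : ∀ x, 0 < η x → f x ≤ 3 * r / 2 := by
    intro x hx
    by_contra hcon
    push_neg at hcon
    have hp : (3 * r / 2 - f x) / r ≤ 0 := div_nonpos_of_nonpos_of_nonneg (by linarith) hr.le
    have h2 : η x ≤ 0 := (min_le_right _ _).trans (max_le hp le_rfl)
    linarith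
  have hη_lip : ∀ x y, |η x - η y| ≤ dist x y / r := by
    intro x y
    have h1 : |η x - η y| ≤ |(3 * r / 2 - f x) / r - (3 * r / 2 - f y) / r| := by
      calc |η x - η y| ≤ max |(1:ℝ) - 1|
            |max ((3 * r / 2 - f x) / r) 0 - max ((3 * r / 2 - f y) / r) 0| :=
          abs_min_sub_min_le_max _ _ _ _
        _ = |max ((3 * r / 2 - f x) / r) 0 - max ((3 * r / 2 - f y) / r) 0| := by
            rw [sub_self, abs_zero]; exact max_eq_right (abs_nonneg _)
        _ ≤ |(3 * r / 2 - f x) / r - (3 * r / 2 - f y) / r| := abs_max_sub_max_le_abs _ _ _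
    have h2 : (3 * r / 2 - f x) / r - (3 * r / 2 - f y) / r = (f y - f x) / r := by ring
    rw [h2] at h1
    calc |η x - η y| ≤ |(f y - f x) / r| := h1
      _ = |f y - f x| / r := by rw [abs_div, abs_of_pos hr]
      _ ≤ dist x y / r := by
          have h3 := hfLip y x
          rw [dist_comm] at h3
          gcongr
  -- symmetry of the edge structure
  have swapE : ∀ F : EuclideanSpace ℝ (Fin d) → EuclideanSpace ℝ (Fin d) → ℝ,
      ∑ x ∈ W, ∑ y ∈ N x, F x y = ∑ x ∈ W, ∑ y ∈ N x, F y x := by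
    intro F
    refine Finset.sum_comm' ?_
    intro x y
    simp only [hN, Finset.mem_filter]
    constructor
    · rintro ⟨hx, hy, hne, hdxy⟩
      exact ⟨⟨hx, hne.symm, by rwa [dist_comm]⟩, hy⟩
    · rintro ⟨⟨hx, hne, hdxy⟩, hy⟩
      exact ⟨hx, hy, hne.symm, by rwa [dist_comm]⟩
  -- harmonicity for v
  have hharm' : ∀ x ∈ W, ∑ y ∈ N x, (v y - v x) = 0 := by
    intro x hx
    have h1 : ∀ y, v y - v x = u y - u x := by intro y; simp only [hv]; ring
    rw [Finset.sum_congr rfl (fun y _ => h1 y)]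
    exact hharm x hx
  -- two vanishing sums
  have hz1 : ∑ x ∈ W, ∑ y ∈ N x, η x ^ 2 * v x * (v x - v y) = 0 := by
    apply Finset.sum_eq_zero
    intro x hx
    have h0 := hharm' x hx
    rw [Finset.sum_sub_distrib] at h0
    rw [← Finset.mul_sum, Finset.sum_sub_distrib,
      show (∑ _y ∈ N x, v x) - (∑ y ∈ N x, v y) = 0 by linarith, mul_zero]
  have hz2 : ∑ x ∈ W, ∑ y ∈ N x, η y ^ 2 * v y * (v x - v y) = 0 := by
    have hs : ∑ x ∈ W, ∑ y ∈ N x, η y ^ 2 * v y * (v x - v y)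
        = ∑ x ∈ W, ∑ y ∈ N x, η x ^ 2 * v x * (v y - v x) := swapE _
    rw [hs]
    apply Finset.sum_eq_zero
    intro x hx
    rw [← Finset.mul_sum, hharm' x hx, mul_zero]
  -- key identity
  have hkey : ∑ x ∈ W, ∑ y ∈ N x, η x ^ 2 * (v x - v y) ^ 2
      = - ∑ x ∈ W, ∑ y ∈ N x, (η x ^ 2 - η y ^ 2) * v y * (v x - v y) := by
    have hexp : ∑ x ∈ W, ∑ y ∈ N x, η x ^ 2 * (v x - v y) ^ 2
        = ∑ x ∈ W, ∑ y ∈ N x,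
            (η x ^ 2 * v x * (v x - v y) - η y ^ 2 * v y * (v x - v y)
              - (η x ^ 2 - η y ^ 2) * v y * (v x - v y)) := by
      exact Finset.sum_congr rfl fun x _ => Finset.sum_congr rfl fun y _ => by ring
    rw [hexp]
    simp only [Finset.sum_sub_distrib]
    rw [hz1, hz2]
    ring
  -- AM-GM bound
  have hstep : ∑ x ∈ W, ∑ y ∈ N x, η x ^ 2 * (v x - v y) ^ 2
      ≤ 1 / 8 * ∑ x ∈ W, ∑ y ∈ N x, (η x + η y) ^ 2 * (v x - v y) ^ 2
        + 2 * ∑ x ∈ W, ∑ y ∈ N x, (η x - η y) ^ 2 * v y ^ 2 := by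
    rw [hkey]
    calc - ∑ x ∈ W, ∑ y ∈ N x, (η x ^ 2 - η y ^ 2) * v y * (v x - v y)
        = ∑ x ∈ W, ∑ y ∈ N x, -((η x ^ 2 - η y ^ 2) * v y * (v x - v y)) := by
          rw [← Finset.sum_neg_distrib]
          exact Finset.sum_congr rfl fun x _ => (Finset.sum_neg_distrib _).symm
      _ ≤ ∑ x ∈ W, ∑ y ∈ N x,
            (1 / 8 * ((η x + η y) ^ 2 * (v x - v y) ^ 2)
              + 2 * ((η x - η y) ^ 2 * v y ^ 2)) := by
          exact Finset.sum_le_sum fun x _ => Finset.sum_le_sum fun y _ =>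
            cac_amgm (η x) (η y) (v x - v y) (v y)
      _ = 1 / 8 * ∑ x ∈ W, ∑ y ∈ N x, (η x + η y) ^ 2 * (v x - v y) ^ 2
            + 2 * ∑ x ∈ W, ∑ y ∈ N x, (η x - η y) ^ 2 * v y ^ 2 := by
          simp only [Finset.sum_add_distrib, Finset.mul_sum]
  -- bound cross term by 4A
  have hT : ∑ x ∈ W, ∑ y ∈ N x, (η x + η y) ^ 2 * (v x - v y) ^ 2
      ≤ 4 * ∑ x ∈ W, ∑ y ∈ N x, η x ^ 2 * (v x - v y) ^ 2 := by
    have h2 : ∑ x ∈ W, ∑ y ∈ N x, η y ^ 2 * (v x - v y) ^ 2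
        = ∑ x ∈ W, ∑ y ∈ N x, η x ^ 2 * (v y - v x) ^ 2 := swapE _
    have h3 : ∑ x ∈ W, ∑ y ∈ N x, η x ^ 2 * (v y - v x) ^ 2
        = ∑ x ∈ W, ∑ y ∈ N x, η x ^ 2 * (v x - v y) ^ 2 :=
      Finset.sum_congr rfl fun x _ => Finset.sum_congr rfl fun y _ => by ring
    calc ∑ x ∈ W, ∑ y ∈ N x, (η x + η y) ^ 2 * (v x - v y) ^ 2
        ≤ ∑ x ∈ W, ∑ y ∈ N x,
            (2 * (η x ^ 2 * (v x - v y) ^ 2) + 2 * (η y ^ 2 * (v x - v y) ^ 2)) := by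
          exact Finset.sum_le_sum fun x _ => Finset.sum_le_sum fun y _ => by
            nlinarith [sq_nonneg ((η x - η y) * (v x - v y))]
      _ = 2 * ∑ x ∈ W, ∑ y ∈ N x, η x ^ 2 * (v x - v y) ^ 2
            + 2 * ∑ x ∈ W, ∑ y ∈ N x, η y ^ 2 * (v x - v y) ^ 2 := by
          simp only [Finset.sum_add_distrib, Finset.mul_sum]
      _ = 4 * ∑ x ∈ W, ∑ y ∈ N x, η x ^ 2 * (v x - v y) ^ 2 := by
          rw [h2, h3]; ring
  -- absorb: A ≤ 4 S'
  have hA4 : ∑ x ∈ W, ∑ y ∈ N x, η x ^ 2 * (v x - v y) ^ 2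
      ≤ 4 * ∑ x ∈ W, ∑ y ∈ N x, (η x - η y) ^ 2 * v y ^ 2 := by linarith
  -- swap S'
  have hSswap : ∑ x ∈ W, ∑ y ∈ N x, (η x - η y) ^ 2 * v y ^ 2
      = ∑ x ∈ W, ∑ y ∈ N x, (η x - η y) ^ 2 * v x ^ 2 := by
    have h1 : ∑ x ∈ W, ∑ y ∈ N x, (η x - η y) ^ 2 * v y ^ 2
        = ∑ x ∈ W, ∑ y ∈ N x, (η y - η x) ^ 2 * v x ^ 2 := swapE _
    rw [h1]
    exact Finset.sum_congr rfl fun x _ => Finset.sum_congr rfl fun y _ => by ring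
  -- bound S by the L² norm on the 1-neighborhood of Q*
  have hSb : ∑ x ∈ W, ∑ y ∈ N x, (η x - η y) ^ 2 * v x ^ 2
      ≤ (D : ℝ) / r ^ 2 *
          ∑ x ∈ W.filter (fun x => Metric.infDist x Qs ≤ 1), v x ^ 2 := by
    rw [Finset.sum_filter, Finset.mul_sum]
    apply Finset.sum_le_sum
    intro x hx
    by_cases hcx : Metric.infDist x Qs ≤ 1
    · rw [if_pos hcx]
      have hcard : ((N x).card : ℝ) ≤ (D : ℝ) := Nat.cast_le.mpr (hdeg x hx)
      calc ∑ y ∈ N x, (η x - η y) ^ 2 * v x ^ 2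
          ≤ ∑ _y ∈ N x, 1 / r ^ 2 * v x ^ 2 := by
            apply Finset.sum_le_sum
            intro y hy
            have hd1 : dist x y ≤ 1 := (Finset.mem_filter.mp hy).2.2
            have hlip : |η x - η y| ≤ 1 / r := by
              refine (hη_lip x y).trans ?_
              gcongr
            have hsq : (η x - η y) ^ 2 ≤ (1 / r) ^ 2 := by
              rw [← sq_abs]
              exact pow_le_pow_left₀ (abs_nonneg _) hlip 2
            have : (1 / r : ℝ) ^ 2 = 1 / r ^ 2 := by rw [div_pow, one_pow]
            rw [← this]
            exact mul_le_mul_of_nonneg_right hsq (sq_nonneg _)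
        _ = ((N x).card : ℝ) * (1 / r ^ 2 * v x ^ 2) := by
            rw [Finset.sum_const, nsmul_eq_mul]
        _ ≤ (D : ℝ) / r ^ 2 * v x ^ 2 := by
            have hnn : (0 : ℝ) ≤ 1 / r ^ 2 * v x ^ 2 := by positivity
            calc ((N x).card : ℝ) * (1 / r ^ 2 * v x ^ 2)
                ≤ (D : ℝ) * (1 / r ^ 2 * v x ^ 2) := mul_le_mul_of_nonneg_right hcard hnn
              _ = (D : ℝ) / r ^ 2 * v x ^ 2 := by ring
    · rw [if_neg hcx, mul_zero]
      have hηx : η x = 0 := by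
        by_contra h
        have hpos : 0 < η x := lt_of_le_of_ne (hη_nonneg x) (Ne.symm h)
        have hmem : x ∈ Qs := fun i => (hfle x i).trans (hη_supp x hpos)
        exact hcx (by rw [Metric.infDist_zero_of_mem hmem]; norm_num)
      refine le_of_eq (Finset.sum_eq_zero fun y hy => ?_)
      have hηy : η y = 0 := by
        by_contra h
        have hpos : 0 < η y := lt_of_le_of_ne (hη_nonneg y) (Ne.symm h)
        have hmem : y ∈ Qs := fun i => (hfle y i).trans (hη_supp y hpos)
        have h1 : Metric.infDist x Qs ≤ Metric.infDist y Qs + dist x y :=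
          Metric.infDist_le_infDist_add_dist
        rw [Metric.infDist_zero_of_mem hmem] at h1
        have hd1 : dist x y ≤ 1 := (Finset.mem_filter.mp hy).2.2
        exact hcx (by linarith)
      rw [hηx, hηy]
      ring
  -- the left-hand side is bounded by A
  have hLHS : ∑ x ∈ W.filter (fun x => ∀ i, |x i - c i| ≤ r / 2),
        ∑ y ∈ (W.filter (fun x => ∀ i, |x i - c i| ≤ r / 2)).filter
            (fun y => y ≠ x ∧ dist x y ≤ 1),
          (u x - u y) ^ 2
      ≤ ∑ x ∈ W, ∑ y ∈ N x, η x ^ 2 * (v x - v y) ^ 2 := by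
    have hsub : W.filter (fun x => ∀ i, |x i - c i| ≤ r / 2) ⊆ W := Finset.filter_subset _ _
    calc ∑ x ∈ W.filter (fun x => ∀ i, |x i - c i| ≤ r / 2),
          ∑ y ∈ (W.filter (fun x => ∀ i, |x i - c i| ≤ r / 2)).filter
              (fun y => y ≠ x ∧ dist x y ≤ 1),
            (u x - u y) ^ 2
        = ∑ x ∈ W.filter (fun x => ∀ i, |x i - c i| ≤ r / 2),
            ∑ y ∈ (W.filter (fun x => ∀ i, |x i - c i| ≤ r / 2)).filter
                (fun y => y ≠ x ∧ dist x y ≤ 1),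
              η x ^ 2 * (v x - v y) ^ 2 := by
          apply Finset.sum_congr rfl
          intro x hx
          have hxQ : ∀ i, |x i - c i| ≤ r / 2 := (Finset.mem_filter.mp hx).2
          have hfx : f x ≤ r / 2 := Finset.sup'_le _ _ fun i _ => hxQ i
          have hx1 : η x = 1 := hη_one x hfx
          apply Finset.sum_congr rfl
          intro y _
          rw [hx1]
          simp only [hv]
          ring
      _ ≤ ∑ x ∈ W.filter (fun x => ∀ i, |x i - c i| ≤ r / 2),
            ∑ y ∈ N x, η x ^ 2 * (v x - v y) ^ 2 := by
          apply Finset.sum_le_sum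
          intro x _
          apply Finset.sum_le_sum_of_subset_of_nonneg
          · exact Finset.filter_subset_filter _ hsub
          · intro y _ _; positivity
      _ ≤ ∑ x ∈ W, ∑ y ∈ N x, η x ^ 2 * (v x - v y) ^ 2 := by
          apply Finset.sum_le_sum_of_subset_of_nonneg hsub
          intro x _ _
          exact Finset.sum_nonneg fun y _ => by positivity
  -- combine
  have hchain : (4 : ℝ) * ∑ x ∈ W, ∑ y ∈ N x, (η x - η y) ^ 2 * v y ^ 2
      ≤ (4 * (D : ℝ) / r ^ 2) *
          ∑ x ∈ W.filter (fun x => Metric.infDist x Qs ≤ 1), v x ^ 2 := by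
    rw [hSswap]
    have h4 : (0:ℝ) ≤ 4 := by norm_num
    calc (4 : ℝ) * ∑ x ∈ W, ∑ y ∈ N x, (η x - η y) ^ 2 * v x ^ 2
        ≤ 4 * ((D : ℝ) / r ^ 2 *
            ∑ x ∈ W.filter (fun x => Metric.infDist x Qs ≤ 1), v x ^ 2) :=
          mul_le_mul_of_nonneg_left hSb h4
      _ = (4 * (D : ℝ) / r ^ 2) *
            ∑ x ∈ W.filter (fun x => Metric.infDist x Qs ≤ 1), v x ^ 2 := by ring
  have hfinal := hLHS.trans (hA4.trans hchain)
  have hvv : ∑ x ∈ W.filter (fun x => Metric.infDist x Qs ≤ 1), v x ^ 2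
      = ∑ x ∈ W.filter (fun x => Metric.infDist x Qs ≤ 1), (u x - k) ^ 2 :=
    Finset.sum_congr rfl fun x _ => by simp only [hv]
  rw [hvv] at hfinal
  exact hfinal
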